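/- The 4×4 matrix Π (with entries polynomial in Cas and ℏ as given) has characteristic polynomial (X - λ₀)²(X - λ₊)(X - λ₋), where λ₀ = (ℏ² - μ²)/4, λ± = (ℏ² - (μ ± 2ℏ)²)/4, and μ² = ℏ² - 4 Cas. Equivalently, tr Π = 2λ₀ + λ₊ + λ₋ and det Π = λ₀² λ₊ λ₋, together with the corresponding identities for the degree-2 and degree-3 symmetric functions. -/

import Mathlib

set_option maxHeartbeats 4000000

open Polynomial

private theorem my_det_fin_four {S : Type*} [CommRing S] (A : Matrix (Fin 4) (Fin 4) S) :
    A.det =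
      A 0 0 * (A 1 1 * A 2 2 * A 3 3 - A 1 1 * A 2 3 * A 3 2 - A 1 2 * A 2 1 * A 3 3
        + A 1 2 * A 2 3 * A 3 1 + A 1 3 * A 2 1 * A 3 2 - A 1 3 * A 2 2 * A 3 1)
      - A 0 1 * (A 1 0 * A 2 2 * A 3 3 - A 1 0 * A 2 3 * A 3 2 - A 1 2 * A 2 0 * A 3 3
        + A 1 2 * A 2 3 * A 3 0 + A 1 3 * A 2 0 * A 3 2 - A 1 3 * A 2 2 * A 3 0)
      + A 0 2 * (A 1 0 * A 2 1 * A 3 3 - A 1 0 * A 2 3 * A 3 1 - A 1 1 * A 2 0 * A 3 3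
        + A 1 1 * A 2 3 * A 3 0 + A 1 3 * A 2 0 * A 3 1 - A 1 3 * A 2 1 * A 3 0)
      - A 0 3 * (A 1 0 * A 2 1 * A 3 2 - A 1 0 * A 2 2 * A 3 1 - A 1 1 * A 2 0 * A 3 2
        + A 1 1 * A 2 2 * A 3 0 + A 1 2 * A 2 0 * A 3 1 - A 1 2 * A 2 1 * A 3 0) := by
  rw [Matrix.det_succ_row_zero]
  simp [Fin.sum_univ_succ, Matrix.det_fin_three, Matrix.submatrix_apply, Fin.succAbove]
  have h3 : (Fin.succ 2 : Fin 4) = 3 := rfl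
  have h2 : (Fin.castSucc 2 : Fin 4) = 2 := rfl
  ring


/-- The 4×4 matrix `Π` has characteristic polynomial
`(X - λ₀)²(X - λ₊)(X - λ₋)` where `λ₀ = (ℏ² - μ²)/4`,
`λ± = (ℏ² - (μ ± 2ℏ)²)/4` and `μ² = ℏ² - 4 Cas`. -/
theorem pi_charpoly (R : Type*) [Field R] [CharZero R] (ℏ Cas μ : R)
    (hμ : μ ^ 2 = ℏ ^ 2 - 4 * Cas) :
    let Pi4 : Matrix (Fin 4) (Fin 4) R :=
      !![Cas - 3 * ℏ ^ 2 / 2, ℏ ^ 2 / 2, -(2 * ℏ), 0;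
         3 * ℏ ^ 2 / 2, Cas - ℏ ^ 2 / 2, 2 * ℏ, 0;
         ℏ * Cas, 0, Cas - ℏ ^ 2 / 2, -ℏ;
         ℏ ^ 2 * Cas, -(ℏ ^ 2 / 2) * Cas, ℏ * (2 * Cas + ℏ ^ 2 / 4), Cas + ℏ ^ 2 / 2]
    let l₀ : R := (ℏ ^ 2 - μ ^ 2) / 4
    let lp : R := (ℏ ^ 2 - (μ + 2 * ℏ) ^ 2) / 4
    let lm : R := (ℏ ^ 2 - (μ - 2 * ℏ) ^ 2) / 4
    Pi4.charpoly = (X - C l₀) ^ 2 * (X - C lp) * (X - C lm) := by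
  have hC : Cas = (ℏ ^ 2 - μ ^ 2) / 4 := by rw [hμ]; ring
  intro Pi4 l₀ lp lm
  apply Polynomial.funext
  intro x
  rw [Matrix.charpoly, ← Polynomial.coe_evalRingHom, RingHom.map_det, RingHom.mapMatrix_apply,
    my_det_fin_four]
  simp only [Pi4, l₀, lp, lm, Matrix.map_apply, Matrix.charmatrix_apply,
    Matrix.diagonal_apply, Matrix.one_apply, Matrix.smul_apply, smul_eq_mul,
    Matrix.cons_val', Matrix.cons_val_zero, Matrix.cons_val_one, Matrix.head_cons,
    Matrix.empty_val', Matrix.cons_val_fin_one, Matrix.head_fin_const, Matrix.cons_val_succ,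
    Fin.isValue, map_sub, map_neg, map_mul, map_add, map_pow, map_zero, map_one,
    eval_sub, eval_mul, eval_add, eval_neg, eval_pow, eval_X, eval_C, eval_zero, eval_one,
    coe_evalRingHom, if_true, if_false, Fin.reduceEq, reduceIte, mul_zero, mul_one, sub_zero,
    zero_sub, neg_zero, Matrix.of_apply, Matrix.cons_val_two, Matrix.cons_val_three, Matrix.tail_cons,
    Matrix.head_cons]
  rw [hC]
  ring
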